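/- Let m ≥ 2, let z_1,…,z_m ∈ ℂ be points not all equal, let τ_1,…,τ_m > 0 with Σ τ_i = 1, and let Φ(z) = Σ_{i=1}^m τ_i/(z - z_i). Let w_1,…,w_{m-1} denote the zeros of Φ, where a point z_i occurring exactly m_i times in the list counts as a zero of Φ with multiplicity m_i - 1. Then for any convex function f : ℂ → ℝ, Σ_{j=1}^{m-1} f(w_j) ≤ Σ_{i=1}^{m} (1 - τ_i) f(z_i). -/

import Mathlib

open Polynomial Matrix Finset Module


lemma my_eval_charpoly {n : Type*} [DecidableEq n] [Fintype n] (M : Matrix n n ℂ) (x : ℂ) :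
    M.charpoly.eval x = (Matrix.diagonal (fun _ => x) - M).det := by
  have h : eval x M.charmatrix.det = ((evalRingHom x).mapMatrix M.charmatrix).det :=
    RingHom.map_det (evalRingHom x) M.charmatrix
  rw [Matrix.charpoly, h]
  congr 1
  ext i j
  by_cases hij : i = j <;>
    simp [hij, charmatrix_apply, Matrix.diagonal_apply]

lemma my_adjugate_inr_inr {k : Type*} [DecidableEq k] [Fintype k]
    (M : Matrix (k ⊕ Unit) (k ⊕ Unit) ℂ) :
    M.adjugate (Sum.inr ()) (Sum.inr ()) = M.toBlocks₁₁.det := by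
  rw [Matrix.adjugate_apply]
  have : M.updateRow (Sum.inr ()) (Pi.single (Sum.inr ()) 1) =
      Matrix.fromBlocks M.toBlocks₁₁ M.toBlocks₁₂ 0 1 := by
    ext i j
    rcases i with i | i <;> rcases j with j | j <;>
      simp [Matrix.updateRow_apply, Matrix.fromBlocks, Matrix.toBlocks₁₁, Matrix.toBlocks₁₂,
        Pi.single_apply, Matrix.one_apply]
  rw [this, Matrix.det_fromBlocks_zero₂₁]
  simp

lemma my_charpoly_conj {n : Type*} [DecidableEq n] [Fintype n] (U B : Matrix n n ℂ)
    (h1 : Uᴴ * U = 1) : (Uᴴ * B * U).charpoly = B.charpoly := by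
  have h2 : U * Uᴴ = 1 := mul_eq_one_comm.mp h1
  have hmap : ∀ (X Y : Matrix n n ℂ), (X * Y).map (C : ℂ →+* ℂ[X]) =
      X.map C * Y.map C := fun X Y => Matrix.map_mul
  have hUU1 : Uᴴ.map (C : ℂ →+* ℂ[X]) * U.map C = 1 := by
    rw [← hmap, h1]; simp
  have hscal : Uᴴ.map (C : ℂ →+* ℂ[X]) * Matrix.scalar n (X : ℂ[X]) * U.map C
      = Matrix.scalar n (X : ℂ[X]) := by
    rw [← (Matrix.scalar_commute (X : ℂ[X]) (fun r' => Commute.all _ _) (Uᴴ.map C)).eq,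
      Matrix.mul_assoc, hUU1, Matrix.mul_one]
  have key : (Uᴴ * B * U).charmatrix = (Uᴴ.map C) * B.charmatrix * (U.map C) := by
    rw [charmatrix, charmatrix, Matrix.mul_sub, Matrix.sub_mul]
    congr 1
    · exact hscal.symm
    · simp only [RingHom.mapMatrix_apply]
      rw [← hmap, ← hmap]
  rw [Matrix.charpoly, Matrix.charpoly, key, Matrix.det_mul, Matrix.det_mul]
  have hdet : (Uᴴ.map (C : ℂ →+* ℂ[X])).det * (U.map C).det = 1 := by
    rw [← Matrix.det_mul, hUU1, Matrix.det_one]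
  calc (Uᴴ.map (C : ℂ →+* ℂ[X])).det * B.charmatrix.det * (U.map C).det
      = B.charmatrix.det * ((Uᴴ.map C).det * (U.map C).det) := by ring
    _ = B.charmatrix.det := by rw [hdet, mul_one]


lemma my_schur_aux (n : ℕ) :
    ∀ (E : Type) [NormedAddCommGroup E] [InnerProductSpace ℂ E] [FiniteDimensional ℂ E],
    finrank ℂ E = n → ∀ L : E →ₗ[ℂ] E,
    ∃ v : Fin n → E, Orthonormal ℂ v ∧
      ∀ k j : Fin n, k < j → (inner ℂ (v j) (L (v k)) : ℂ) = 0 := by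
  induction n with
  | zero =>
    intro E _ _ _ _ L
    refine ⟨Fin.elim0, orthonormal_iff_ite.mpr (fun i => i.elim0), fun k => k.elim0⟩
  | succ n ih =>
    intro E _ _ _ hdim L
    have : Nontrivial E := by
      have : 0 < finrank ℂ E := by omega
      exact Module.nontrivial_of_finrank_pos this
    obtain ⟨μ, hμ⟩ := Module.End.exists_eigenvalue (L : Module.End ℂ E)
    obtain ⟨x, hx⟩ := hμ.exists_hasEigenvector
    set v₀ : E := ((‖x‖ : ℂ))⁻¹ • x with hv₀def
    have hx0 : x ≠ 0 := hx.right
    have hv₀norm : ‖v₀‖ = 1 := norm_smul_inv_norm hx0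
    have hv₀ne : v₀ ≠ 0 := by
      intro h; rw [h] at hv₀norm; simp at hv₀norm
    have hLv₀ : L v₀ = μ • v₀ := by
      rw [hv₀def, L.map_smul, hx.apply_eq_smul, smul_comm]
    set K : Submodule ℂ E := ℂ ∙ v₀ with hKdef
    set F : Submodule ℂ E := Kᗮ with hFdef
    have hv₀K : v₀ ∈ K := Submodule.mem_span_singleton_self v₀
    have hdimF : finrank ℂ F = n := by
      have h1 : finrank ℂ K = 1 := finrank_span_singleton hv₀ne
      have h2 := Submodule.finrank_add_finrank_orthogonal K
      rw [hFdef]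
      omega
    set L' : F →ₗ[ℂ] F :=
      ((F.orthogonalProjection : E →L[ℂ] F) : E →ₗ[ℂ] F).comp (L.comp F.subtype) with hL'def
    obtain ⟨v', hv'on, hv'tri⟩ := ih F hdimF L'
    set v : Fin (n + 1) → E := Fin.cons v₀ (fun i => ((v' i : F) : E)) with hvdef
    have hinF : ∀ i, ((v' i : F) : E) ∈ F := fun i => (v' i).2
    have hv'inner : ∀ i j : Fin n, (inner ℂ ((v' i : F) : E) ((v' j : F) : E) : ℂ)
        = if i = j then 1 else 0 := by
      intro i j
      rw [← Submodule.coe_inner]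
      exact orthonormal_iff_ite.mp hv'on i j
    refine ⟨v, ?_, ?_⟩
    · rw [orthonormal_iff_ite]
      intro i j
      obtain rfl | ⟨i', rfl⟩ := i.eq_zero_or_eq_succ <;>
        obtain rfl | ⟨j', rfl⟩ := j.eq_zero_or_eq_succ
      · simp [hvdef, inner_self_eq_norm_sq_to_K, hv₀norm]
      · simp only [hvdef, Fin.cons_zero, Fin.cons_succ]
        rw [if_neg (Fin.succ_ne_zero j').symm]
        exact Submodule.inner_right_of_mem_orthogonal hv₀K (hinF j')
      · simp only [hvdef, Fin.cons_zero, Fin.cons_succ]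
        rw [if_neg (Fin.succ_ne_zero i')]
        exact Submodule.inner_left_of_mem_orthogonal hv₀K (hinF i')
      · simp only [hvdef, Fin.cons_succ]
        rw [hv'inner]
        simp [Fin.succ_inj]
    · intro k j hkj
      obtain rfl | ⟨j', rfl⟩ := j.eq_zero_or_eq_succ
      · exact absurd hkj (by simp)
      · obtain rfl | ⟨k', rfl⟩ := k.eq_zero_or_eq_succ
        · simp only [hvdef, Fin.cons_zero, Fin.cons_succ, hLv₀, inner_smul_right]
          rw [Submodule.inner_left_of_mem_orthogonal hv₀K (hinF j')]
          ring
        · have hk'j' : k' < j' := by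
            simpa [Fin.succ_lt_succ_iff] using hkj
          simp only [hvdef, Fin.cons_succ]
          set y : E := L ((v' k' : F) : E) with hydef
          have hsplit : y = (y - (F.orthogonalProjection y : E)) + (F.orthogonalProjection y : E) :=
            (sub_add_cancel y _).symm
          rw [hsplit, inner_add_right]
          have h1 : (inner ℂ ((v' j' : F) : E) (y - (F.orthogonalProjection y : E)) : ℂ) = 0 :=
            Submodule.inner_right_of_mem_orthogonal (hinF j')
              (F.sub_starProjection_mem_orthogonal y)
          have h2 : (inner ℂ ((v' j' : F) : E) ((F.orthogonalProjection y : F) : E) : ℂ) = 0 := by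
            rw [← Submodule.coe_inner]
            have := hv'tri k' j' hk'j'
            simpa [hL'def] using this
          rw [h1, h2, add_zero]


lemma my_conjT_mul_self {κ κ' : Type*} [Fintype κ] [DecidableEq κ] [Fintype κ']
    (v : κ → EuclideanSpace ℂ κ') (hv : Orthonormal ℂ v) :
    (Matrix.of fun i p => v p i)ᴴ * (Matrix.of fun i p => v p i) = 1 := by
  ext p q
  rw [Matrix.mul_apply, Matrix.one_apply]
  have h := orthonormal_iff_ite.mp hv p q
  rw [PiLp.inner_apply] at h
  simpa [Matrix.conjTranspose_apply, RCLike.inner_apply, mul_comm] using h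


lemma my_toBlocks_sub {k : Type} (X Y : Matrix (k ⊕ Unit) (k ⊕ Unit) ℂ) :
    (X - Y).toBlocks₁₁ = X.toBlocks₁₁ - Y.toBlocks₁₁ := rfl

lemma my_toBlocks_diagonal {k : Type} [DecidableEq k] (x : ℂ) :
    (Matrix.diagonal (fun _ : k ⊕ Unit => x)).toBlocks₁₁ = Matrix.diagonal (fun _ : k => x) := by
  ext i j
  by_cases h : i = j <;> simp [Matrix.toBlocks₁₁, Matrix.diagonal_apply, h]

theorem szego_nagy_majorization (m : ℕ) (hm : 2 ≤ m)
    (z : Fin m → ℂ) (hz : ¬ ∀ i j, z i = z j)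
    (τ : Fin m → ℝ) (hτpos : ∀ i, 0 < τ i) (hτsum : ∑ i, τ i = 1)
    (w : Fin (m - 1) → ℂ)
    (hw : (∑ i, Polynomial.C (τ i : ℂ) *
        ∏ l ∈ Finset.univ.erase i, (Polynomial.X - Polynomial.C (z l))).roots =
      Multiset.map w Finset.univ.val)
    (f : ℂ → ℝ) (hf : ConvexOn ℝ Set.univ f) :
    ∑ j, f (w j) ≤ ∑ i, (1 - τ i) * f (z i) := by
  classical
  have hn : (m - 1) + 1 = m := by omega
  set P : ℂ[X] := ∑ i, Polynomial.C (τ i : ℂ) *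
      ∏ l ∈ Finset.univ.erase i, (Polynomial.X - Polynomial.C (z l)) with hPdef
  let e : (Fin (m-1) ⊕ Unit) ≃ Fin m :=
    ((Equiv.refl (Fin (m-1))).sumCongr (Equiv.ofUnique Unit (Fin 1))).trans
      (finSumFinEquiv.trans (finCongr hn))
  set τ' : Fin (m-1) ⊕ Unit → ℝ := fun p => τ (e p) with hτ'def
  set z' : Fin (m-1) ⊕ Unit → ℂ := fun p => z (e p) with hz'def
  have hτ'pos : ∀ p, 0 < τ' p := fun p => hτpos _
  have hsum' : ∑ p, τ' p = 1 := by rw [← hτsum]; exact Equiv.sum_comp e τ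
  -- the unit vector u
  set u : EuclideanSpace ℂ (Fin (m-1) ⊕ Unit) := WithLp.toLp 2 (fun p => (Real.sqrt (τ' p) : ℂ)) with hudef
  have hsq : ∀ p, ((starRingEnd ℂ) (u p)) * u p = ((τ' p : ℝ) : ℂ) := by
    intro p
    simp only [hudef, Complex.conj_ofReal, ← Complex.ofReal_mul,
      Real.mul_self_sqrt (le_of_lt (hτ'pos p))]
  have huu : (inner ℂ u u : ℂ) = 1 := by
    rw [PiLp.inner_apply]
    simp only [RCLike.inner_apply]
    rw [Finset.sum_congr rfl (fun p _ => (mul_comm _ _).trans (hsq p)), ← Complex.ofReal_sum, hsum']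
    simp
  have hunorm : ‖u‖ = 1 := by
    rw [EuclideanSpace.norm_eq]
    have hcal : ∀ p, ‖u p‖ ^ 2 = τ' p := by
      intro p
      rw [hudef]
      simp only [Complex.norm_real]
      rw [Real.norm_eq_abs, abs_of_nonneg (Real.sqrt_nonneg _), Real.sq_sqrt (hτ'pos p).le]
    rw [Finset.sum_congr rfl (fun p _ => hcal p), hsum', Real.sqrt_one]
  -- orthonormal basis extending u
  have card_ι : finrank ℂ (EuclideanSpace ℂ (Fin (m-1) ⊕ Unit))
      = Fintype.card (Fin (m-1) ⊕ Unit) := finrank_euclideanSpace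
  have hres : Orthonormal ℂ (({Sum.inr ()} : Set (Fin (m-1) ⊕ Unit)).restrict
      (fun _ => u : (Fin (m-1) ⊕ Unit) → EuclideanSpace ℂ (Fin (m-1) ⊕ Unit))) := by
    rw [orthonormal_iff_ite]
    intro i j
    have hij : i = j := Subtype.ext (i.2.trans j.2.symm)
    rw [if_pos hij]
    exact huu
  obtain ⟨b, hb⟩ := hres.exists_orthonormalBasis_extension_of_card_eq card_ι
  have hbu : b (Sum.inr ()) = u := hb _ rfl
  -- the unitary W
  set W : Matrix (Fin (m-1) ⊕ Unit) (Fin (m-1) ⊕ Unit) ℂ :=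
    Matrix.of (fun i p => b p i) with hWdef
  have hWW : Wᴴ * W = 1 := my_conjT_mul_self _ b.orthonormal
  have hWW' : W * Wᴴ = 1 := mul_eq_one_comm.mp hWW
  set A : Matrix (Fin (m-1)) (Fin (m-1)) ℂ :=
    (Wᴴ * Matrix.diagonal z' * W).toBlocks₁₁ with hAdef
  -- charpoly identity
  have key : ∀ x : ℂ, (∀ i : Fin m, x ≠ z i) → A.charpoly.eval x = P.eval x := by
    intro x hx
    have hxz' : ∀ p, x - z' p ≠ 0 := fun p => sub_ne_zero.mpr (hx (e p))
    set N : Matrix (Fin (m-1) ⊕ Unit) (Fin (m-1) ⊕ Unit) ℂ :=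
      Matrix.diagonal (fun p => x - z' p) with hNdef
    set Ninv : Matrix (Fin (m-1) ⊕ Unit) (Fin (m-1) ⊕ Unit) ℂ :=
      Matrix.diagonal (fun p => (x - z' p)⁻¹) with hNinvdef
    have hNN : N * Ninv = 1 := by
      rw [hNdef, hNinvdef, Matrix.diagonal_mul_diagonal]
      have : (fun p => (x - z' p) * (x - z' p)⁻¹) = fun _ : Fin (m-1) ⊕ Unit => (1 : ℂ) :=
        funext fun p => mul_inv_cancel₀ (hxz' p)
      rw [this, Matrix.diagonal_one]
    set M : Matrix (Fin (m-1) ⊕ Unit) (Fin (m-1) ⊕ Unit) ℂ := Wᴴ * N * W with hMdef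
    set Minv : Matrix (Fin (m-1) ⊕ Unit) (Fin (m-1) ⊕ Unit) ℂ := Wᴴ * Ninv * W with hMinvdef
    have hMdet : M.det = N.det := by
      rw [hMdef, Matrix.det_mul, Matrix.det_mul]
      have h1 : Wᴴ.det * W.det = 1 := by rw [← Matrix.det_mul, hWW, Matrix.det_one]
      calc Wᴴ.det * N.det * W.det = N.det * (Wᴴ.det * W.det) := by ring
        _ = N.det := by rw [h1, mul_one]
    have hMM : M * Minv = 1 := by
      rw [hMdef, hMinvdef]
      calc Wᴴ * N * W * (Wᴴ * Ninv * W) = Wᴴ * (N * (W * Wᴴ) * Ninv) * W := by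
            simp only [Matrix.mul_assoc]
        _ = 1 := by rw [hWW', Matrix.mul_one, hNN, Matrix.mul_one, hWW]
    have hadj : M.adjugate = M.det • Minv := by
      calc M.adjugate = M.adjugate * 1 := (Matrix.mul_one _).symm
        _ = M.adjugate * (M * Minv) := by rw [hMM]
        _ = M.adjugate * M * Minv := (Matrix.mul_assoc M.adjugate M Minv).symm
        _ = (M.det • 1) * Minv := by rw [Matrix.adjugate_mul]
        _ = M.det • Minv := by rw [Matrix.smul_mul, Matrix.one_mul]
    have hMsub : M = Matrix.diagonal (fun _ : Fin (m-1) ⊕ Unit => x) - Wᴴ * Matrix.diagonal z' * W := by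
      have hNsub : N = Matrix.diagonal (fun _ : Fin (m-1) ⊕ Unit => x) - Matrix.diagonal z' := by
        rw [hNdef]
        ext p q
        by_cases h : p = q <;> simp [h, Matrix.diagonal_apply]
      have hscal : Wᴴ * Matrix.diagonal (fun _ : Fin (m-1) ⊕ Unit => x) * W
          = Matrix.diagonal (fun _ : Fin (m-1) ⊕ Unit => x) := by
        have h1 : Matrix.diagonal (fun _ : Fin (m-1) ⊕ Unit => x)
            = Matrix.scalar (Fin (m-1) ⊕ Unit) x := rfl
        rw [h1, ← (Matrix.scalar_commute x (fun r' => Commute.all _ _) Wᴴ).eq,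
          Matrix.mul_assoc, hWW, Matrix.mul_one]
      rw [hMdef, hNsub, Matrix.mul_sub, Matrix.sub_mul, hscal]
    have hMblock : Matrix.diagonal (fun _ : Fin (m-1) => x) - A = M.toBlocks₁₁ := by
      rw [hMsub, my_toBlocks_sub, my_toBlocks_diagonal, hAdef]
    have hMinv_entry : Minv (Sum.inr ()) (Sum.inr ())
        = ∑ p, ((τ' p : ℝ) : ℂ) * (x - z' p)⁻¹ := by
      rw [hMinvdef, Matrix.mul_apply]
      apply Finset.sum_congr rfl
      intro p _
      rw [Matrix.mul_diagonal]
      have hWu : W p (Sum.inr ()) = u p := by rw [hWdef]; simp [hbu]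
      rw [Matrix.conjTranspose_apply, hWu]
      calc (starRingEnd ℂ) (u p) * (x - z' p)⁻¹ * u p
          = ((starRingEnd ℂ) (u p) * u p) * (x - z' p)⁻¹ := by ring
        _ = ((τ' p : ℝ) : ℂ) * (x - z' p)⁻¹ := by rw [hsq p]
    have hPeval : P.eval x = ∑ p, ((τ' p : ℝ) : ℂ) * ∏ l ∈ Finset.univ.erase p, (x - z' l) := by
      rw [hPdef, Polynomial.eval_finset_sum]
      simp only [Polynomial.eval_mul, Polynomial.eval_C, Polynomial.eval_prod,
        Polynomial.eval_sub, Polynomial.eval_X]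
      rw [← Equiv.sum_comp e
        (fun i => ((τ i : ℝ) : ℂ) * ∏ l ∈ Finset.univ.erase i, (x - z l))]
      apply Finset.sum_congr rfl
      intro p _
      congr 1
      have himg : Finset.image e (Finset.univ.erase p) = Finset.univ.erase (e p) := by
        rw [Finset.image_erase e.injective, Finset.image_univ_equiv]
      rw [← himg, Finset.prod_image (fun a _ c _ h => e.injective h)]
    calc A.charpoly.eval x = (Matrix.diagonal (fun _ : Fin (m-1) => x) - A).det :=
          my_eval_charpoly _ _
      _ = M.toBlocks₁₁.det := by rw [hMblock]
      _ = M.adjugate (Sum.inr ()) (Sum.inr ()) := (my_adjugate_inr_inr M).symm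
      _ = M.det * Minv (Sum.inr ()) (Sum.inr ()) := by rw [hadj, Matrix.smul_apply, smul_eq_mul]
      _ = N.det * Minv (Sum.inr ()) (Sum.inr ()) := by rw [hMdet]
      _ = (∏ p, (x - z' p)) * ∑ p, ((τ' p : ℝ) : ℂ) * (x - z' p)⁻¹ := by
          rw [hNdef, Matrix.det_diagonal, hMinv_entry]
      _ = ∑ p, ((τ' p : ℝ) : ℂ) * ∏ l ∈ Finset.univ.erase p, (x - z' l) := by
          rw [Finset.mul_sum]
          apply Finset.sum_congr rfl
          intro p _
          rw [← Finset.mul_prod_erase Finset.univ _ (Finset.mem_univ p)]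
          have := hxz' p
          field_simp
      _ = P.eval x := hPeval.symm
  have hcharA : A.charpoly = P := by
    apply Polynomial.eq_of_infinite_eval_eq
    apply Set.Infinite.mono ?_ ((Set.finite_range z).infinite_compl)
    intro x hx
    exact key x (fun i h => hx ⟨i, h.symm⟩)
  have hwroots : A.charpoly.roots = Multiset.map w Finset.univ.val := by rw [hcharA]; exact hw
  -- Schur triangularization of A
  have hdimE' : finrank ℂ (EuclideanSpace ℂ (Fin (m-1))) = m - 1 := by
    simp [finrank_euclideanSpace]
  obtain ⟨v, hvon, hvtri⟩ := my_schur_aux (m-1) (EuclideanSpace ℂ (Fin (m-1))) hdimE'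
    (Matrix.toEuclideanLin A)
  set U : Matrix (Fin (m-1)) (Fin (m-1)) ℂ := Matrix.of (fun i j => v j i) with hUdef
  have hUU : Uᴴ * U = 1 := my_conjT_mul_self v hvon
  have hUU' : U * Uᴴ = 1 := mul_eq_one_comm.mp hUU
  set T : Matrix (Fin (m-1)) (Fin (m-1)) ℂ := Uᴴ * A * U with hTdef
  have hTij : ∀ i j, T i j = (inner ℂ (v i) (Matrix.toEuclideanLin A (v j)) : ℂ) := by
    intro i j
    rw [PiLp.inner_apply]
    simp only [RCLike.inner_apply, Matrix.toEuclideanLin_apply]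
    have hrhs : ∑ p, (A *ᵥ (v j).ofLp) p * (starRingEnd ℂ) (v i p)
        = ∑ p, ∑ q, A p q * U q j * (starRingEnd ℂ) (U p i) := by
      apply Finset.sum_congr rfl
      intro p _
      rw [Matrix.mulVec, dotProduct, Finset.sum_mul]
      apply Finset.sum_congr rfl
      intro q _
      rfl
    rw [hrhs, hTdef, Matrix.mul_apply, Finset.sum_comm]
    apply Finset.sum_congr rfl
    intro p _
    rw [Matrix.mul_apply, Finset.sum_mul]
    apply Finset.sum_congr rfl
    intro q _
    rw [Matrix.conjTranspose_apply, hUdef]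
    simp only [Matrix.of_apply, RCLike.star_def]
    ring
  have hTtri : T.BlockTriangular id := by
    intro i j hij
    rw [hTij]
    exact hvtri j i hij
  have hcharT : T.charpoly = A.charpoly := my_charpoly_conj U A hUU
  set d : Fin (m-1) → ℂ := fun j => T j j with hddef
  have hTprod : T.charpoly = ∏ i, (X - C (d i)) := Matrix.charpoly_of_upperTriangular T hTtri
  have hmult : Multiset.map w Finset.univ.val = Multiset.map d Finset.univ.val := by
    rw [← hwroots, ← hcharT, hTprod]
    have hprodeq : ∏ i, (X - C (d i))
        = (Multiset.map (fun a => X - C a) (Multiset.map d Finset.univ.val)).prod := by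
      rw [Multiset.map_map]
      rfl
    rw [hprodeq, Polynomial.roots_multiset_prod_X_sub_C]
  have hsumwd : ∑ j, f (w j) = ∑ j, f (d j) := by
    have h1 : ∑ j, f (w j) = (Multiset.map f (Multiset.map w Finset.univ.val)).sum := by
      rw [Multiset.map_map]
      rfl
    have h2 : ∑ j, f (d j) = (Multiset.map f (Multiset.map d Finset.univ.val)).sum := by
      rw [Multiset.map_map]
      rfl
    rw [h1, h2, hmult]
  -- majorization matrix
  set Wl : Matrix (Fin (m-1) ⊕ Unit) (Fin (m-1)) ℂ := W.submatrix id Sum.inl with hWldef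
  set Q : Matrix (Fin (m-1) ⊕ Unit) (Fin (m-1)) ℂ := Wl * U with hQdef
  set a : Fin (m-1) → (Fin (m-1) ⊕ Unit) → ℝ := fun j p => Complex.normSq (Q p j) with hadef
  have hconj : ∀ q : ℂ, star q * q = (Complex.normSq q : ℂ) := fun q => by
    rw [RCLike.star_def, mul_comm, Complex.mul_conj]
  have hconj' : ∀ q : ℂ, q * star q = (Complex.normSq q : ℂ) := fun q => by
    rw [RCLike.star_def, Complex.mul_conj]
  have hWlWl : Wlᴴ * Wl = 1 := by
    ext j k
    have h : (Wᴴ * W) (Sum.inl j) (Sum.inl k)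
        = (1 : Matrix (Fin (m-1) ⊕ Unit) (Fin (m-1) ⊕ Unit) ℂ) (Sum.inl j) (Sum.inl k) := by
      rw [hWW]
    rw [Matrix.mul_apply] at h
    rw [Matrix.mul_apply]
    have hlhs : ∑ p, (Wlᴴ) j p * Wl p k = ∑ p, Wᴴ (Sum.inl j) p * W p (Sum.inl k) := by
      apply Finset.sum_congr rfl
      intro p _
      rw [hWldef]
      rfl
    rw [hlhs, h]
    simp [Matrix.one_apply]
  have hQQ : Qᴴ * Q = 1 := by
    rw [hQdef, Matrix.conjTranspose_mul]
    calc Uᴴ * Wlᴴ * (Wl * U) = Uᴴ * (Wlᴴ * Wl * U) := by simp only [Matrix.mul_assoc]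
      _ = 1 := by rw [hWlWl, Matrix.one_mul, hUU]
  have hQQ' : Q * Qᴴ = Wl * Wlᴴ := by
    rw [hQdef, Matrix.conjTranspose_mul]
    calc Wl * U * (Uᴴ * Wlᴴ) = Wl * (U * Uᴴ) * Wlᴴ := by simp only [Matrix.mul_assoc]
      _ = Wl * Wlᴴ := by rw [hUU', Matrix.mul_one]
  have hrow : ∀ j, ∑ p, a j p = 1 := by
    intro j
    have h : (Qᴴ * Q) j j = (1 : Matrix _ _ ℂ) j j := by rw [hQQ]
    rw [Matrix.mul_apply, Matrix.one_apply_eq] at h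
    have h2 : ∑ p, ((a j p : ℝ) : ℂ) = 1 := by
      rw [← h]
      apply Finset.sum_congr rfl
      intro p _
      rw [Matrix.conjTranspose_apply, hconj, hadef]
    have h3 : ((∑ p, a j p : ℝ) : ℂ) = 1 := by rw [Complex.ofReal_sum]; exact h2
    exact_mod_cast h3
  have hcol : ∀ p, ∑ j, a j p = 1 - τ' p := by
    intro p
    have h : (Q * Qᴴ) p p = (Wl * Wlᴴ) p p := by rw [hQQ']
    have hL : (Q * Qᴴ) p p = ∑ j, ((a j p : ℝ) : ℂ) := by
      rw [Matrix.mul_apply]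
      apply Finset.sum_congr rfl
      intro j _
      rw [Matrix.conjTranspose_apply, hconj', hadef]
    have hWfull : (W * Wᴴ) p p = (1 : ℂ) := by rw [hWW']; rw [Matrix.one_apply_eq]
    have hWsum : ∑ q : Fin (m-1) ⊕ Unit, W p q * star (W p q) = 1 := by
      rw [← hWfull, Matrix.mul_apply]
      apply Finset.sum_congr rfl
      intro q _
      rw [Matrix.conjTranspose_apply]
    rw [Fintype.sum_sum_type] at hWsum
    have hinr : ∑ q : Unit, W p (Sum.inr q) * star (W p (Sum.inr q))
        = ((τ' p : ℝ) : ℂ) := by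
      have hWu : W p (Sum.inr ()) = u p := by rw [hWdef]; simp [hbu]
      rw [Fintype.sum_unique (fun q : Unit => W p (Sum.inr q) * star (W p (Sum.inr q)))]
      rw [hWu, mul_comm]
      exact hsq p
    have hR : (Wl * Wlᴴ) p p = 1 - ((τ' p : ℝ) : ℂ) := by
      rw [Matrix.mul_apply]
      have : ∑ j, Wl p j * (Wlᴴ) j p
          = ∑ j, W p (Sum.inl j) * star (W p (Sum.inl j)) := by
        apply Finset.sum_congr rfl
        intro j _
        rw [hWldef, Matrix.conjTranspose_apply]
        rfl
      rw [this]
      have := hWsum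
      rw [hinr] at this
      linear_combination this
    have hfin : ∑ j, ((a j p : ℝ) : ℂ) = 1 - ((τ' p : ℝ) : ℂ) := by
      rw [← hL, h, hR]
    have h3 : ((∑ j, a j p : ℝ) : ℂ) = ((1 - τ' p : ℝ) : ℂ) := by
      push_cast
      rw [← hfin]
    exact_mod_cast h3
  have hA2 : A = Wlᴴ * Matrix.diagonal z' * Wl := by
    rw [hAdef]
    ext j k
    rw [Matrix.toBlocks₁₁]
    simp only [Matrix.of_apply]
    rw [Matrix.mul_apply, Matrix.mul_apply]
    apply Finset.sum_congr rfl
    intro q _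
    rw [Matrix.mul_diagonal, Matrix.mul_diagonal]
    rw [hWldef, Matrix.conjTranspose_apply, Matrix.conjTranspose_apply]
    rfl
  have hd : ∀ j, d j = ∑ p, a j p • z' p := by
    intro j
    have hTQ : T = Qᴴ * Matrix.diagonal z' * Q := by
      rw [hTdef, hA2, hQdef, Matrix.conjTranspose_mul]
      simp only [Matrix.mul_assoc]
    have hstep : ∀ p : Fin (m-1) ⊕ Unit,
        (Qᴴ * Matrix.diagonal z') j p = star (Q p j) * z' p := by
      intro p
      rw [Matrix.mul_diagonal, Matrix.conjTranspose_apply]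
    show T j j = _
    rw [hTQ, Matrix.mul_apply]
    apply Finset.sum_congr rfl
    intro p _
    rw [hstep p, Complex.real_smul, hadef]
    calc star (Q p j) * z' p * Q p j
        = (star (Q p j) * Q p j) * z' p := by ring
      _ = (Complex.normSq (Q p j) : ℂ) * z' p := by rw [hconj]
  have hjensen : ∀ j, f (d j) ≤ ∑ p, a j p * f (z' p) := by
    intro j
    have h := hf.map_sum_le (t := Finset.univ) (w := a j) (p := z')
      (fun p _ => Complex.normSq_nonneg _) (hrow j) (fun p _ => Set.mem_univ _)
    rw [← hd j] at h
    simpa [smul_eq_mul] using h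
  calc ∑ j, f (w j) = ∑ j, f (d j) := hsumwd
    _ ≤ ∑ j, ∑ p, a j p * f (z' p) := Finset.sum_le_sum (fun j _ => hjensen j)
    _ = ∑ p, (∑ j, a j p) * f (z' p) := by
        rw [Finset.sum_comm]
        apply Finset.sum_congr rfl
        intro p _
        rw [Finset.sum_mul]
    _ = ∑ p, (1 - τ' p) * f (z' p) := by
        apply Finset.sum_congr rfl
        intro p _
        rw [hcol p]
    _ = ∑ i, (1 - τ i) * f (z i) := Equiv.sum_comp e (fun i => (1 - τ i) * f (z i))
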